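/- arXiv:1811.05758 — 3 statements merged into one kernel-verified Lean document; each statement's English description precedes it below -/
import Mathlib

section
/- For every integer D ≥ 5, the Lebesgue measure of the set Ω = {X ∈ (ℝ³)^D : V_B(X) < 1} is finite. -/
set_option maxHeartbeats 1000000

open MeasureTheory RealInnerProductSpace

/-- The cross product on `ℝ³` viewed as `EuclideanSpace ℝ (Fin 3)`. -/
noncomputable def cross3 (u v : EuclideanSpace ℝ (Fin 3)) : EuclideanSpace ℝ (Fin 3) :=
  (WithLp.equiv 2 (Fin 3 → ℝ)).symm
    (crossProduct ((WithLp.equiv 2 (Fin 3 → ℝ)) u) ((WithLp.equiv 2 (Fin 3 → ℝ)) v))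

/-- The SU(2) bosonic membrane potential
`V_B(X) = (1/2) ∑_{i,j} |X_i × X_j|²`. -/
noncomputable def VB (D : ℕ) (X : Fin D → EuclideanSpace ℝ (Fin 3)) : ℝ :=
  (1 / 2) * ∑ i, ∑ j, ‖cross3 (X i) (X j)‖ ^ 2

lemma norm_sq_eq3 (w : EuclideanSpace ℝ (Fin 3)) : ‖w‖^2 = ∑ i, w i ^ 2 := by
  rw [EuclideanSpace.norm_eq, Real.sq_sqrt (by positivity)]
  simp [sq_abs]
lemma norm_cross3_sq (u v : EuclideanSpace ℝ (Fin 3)) :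
    ‖cross3 u v‖^2 = ‖u‖^2 * ‖v‖^2 - ⟪u, v⟫^2 := by
  simp only [norm_sq_eq3, PiLp.inner_apply, RCLike.inner_apply, starRingEnd_apply, star_trivial]
  simp only [cross3, WithLp.equiv_symm_apply, WithLp.ofLp_toLp, crossProduct, LinearMap.mk₂_apply]
  simp only [Fin.sum_univ_three, WithLp.equiv_apply, Matrix.cons_val_zero, Matrix.cons_val_one,
    Matrix.head_cons, Matrix.cons_val_two, Matrix.tail_cons]
  ring

def Kset (u : EuclideanSpace ℝ (Fin 3)) : Set (EuclideanSpace ℝ (Fin 3)) :=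
  {v | ‖v‖ ≤ ‖u‖ ∧ ‖cross3 u v‖^2 ≤ 2}

lemma box_arith {r s x0 x1 x2 n : ℝ} (hr0 : 0 < r) (hs : s = min r (Real.sqrt 2 / r))
    (hsum : x0^2 + x1^2 + x2^2 = n) (hn : n ≤ r^2) (key : r^2 * (x1^2 + x2^2) ≤ 2) :
    (-r ≤ x0 ∧ x0 ≤ r) ∧ (-s ≤ x1 ∧ x1 ≤ s) ∧ (-s ≤ x2 ∧ x2 ≤ s) := by
  have hS2 : Real.sqrt 2 ^ 2 = 2 := Real.sq_sqrt (by norm_num)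
  have hSpos : 0 < Real.sqrt 2 / r := by positivity
  have h1 : x1^2 ≤ (Real.sqrt 2 / r)^2 := by
    rw [div_pow, hS2, le_div_iff₀ (by positivity)]
    nlinarith [sq_nonneg x2]
  have h2 : x2^2 ≤ (Real.sqrt 2 / r)^2 := by
    rw [div_pow, hS2, le_div_iff₀ (by positivity)]
    nlinarith [sq_nonneg x1]
  have h1r : x1^2 ≤ r^2 := by nlinarith [sq_nonneg x0, sq_nonneg x2]
  have h2r : x2^2 ≤ r^2 := by nlinarith [sq_nonneg x0, sq_nonneg x1]
  have h0r : x0^2 ≤ r^2 := by nlinarith [sq_nonneg x1, sq_nonneg x2]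
  have habs : ∀ x c : ℝ, 0 < c → x^2 ≤ c^2 → -c ≤ x ∧ x ≤ c := by
    intro x c hc hxc
    constructor <;> nlinarith
  rcases le_total r (Real.sqrt 2 / r) with h | h
  · rw [hs, min_eq_left h]
    exact ⟨habs _ _ hr0 h0r, habs _ _ hr0 h1r, habs _ _ hr0 h2r⟩
  · rw [hs, min_eq_right h]
    exact ⟨habs _ _ hr0 h0r, habs _ _ hSpos h1, habs _ _ hSpos h2⟩

lemma vol_arith {r s : ℝ} (hr0 : 0 < r) (hs : s = min r (Real.sqrt 2 / r)) :
    (r + r) * ((s + s) * (s + s)) ≤ 32 / (1 + r) := by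
  have hS2 : Real.sqrt 2 ^ 2 = 2 := Real.sq_sqrt (by norm_num)
  have hs0 : 0 < s := by rw [hs]; exact lt_min hr0 (by positivity)
  rw [le_div_iff₀ (by positivity)]
  rcases le_total r 1 with h1 | h1
  · have hsr : s ≤ r := by rw [hs]; exact min_le_left _ _
    have hs1 : s ≤ 1 := hsr.trans h1
    have hA : (s + s) * (s + s) ≤ 4 := by nlinarith
    have hB : (r + r) * ((s + s) * (s + s)) ≤ 2 * 4 :=
      mul_le_mul (by linarith) hA (by positivity) (by norm_num)
    have hC : (r + r) * ((s + s) * (s + s)) * (1 + r) ≤ 8 * 2 :=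
      mul_le_mul (by linarith) (by linarith) (by positivity) (by positivity)
    linarith
  · have hsr : s ≤ Real.sqrt 2 / r := by rw [hs]; exact min_le_right _ _
    have h2 : s^2 * r^2 ≤ 2 := by
      have hss : s^2 ≤ (Real.sqrt 2 / r)^2 := pow_le_pow_left₀ hs0.le hsr 2
      calc s^2 * r^2 ≤ (Real.sqrt 2 / r)^2 * r^2 := by nlinarith [sq_nonneg r]
        _ = 2 := by rw [div_pow, hS2]; field_simp
    nlinarith [hs0.le]

lemma volume_Kset_le (u : EuclideanSpace ℝ (Fin 3)) :
    volume (Kset u) ≤ ENNReal.ofReal (32 / (1 + ‖u‖)) := by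
  rcases eq_or_ne u 0 with rfl | hu
  · have hsub : Kset (0 : EuclideanSpace ℝ (Fin 3)) ⊆ {0} := by
      intro v hv
      simp only [Kset, norm_zero, Set.mem_setOf_eq] at hv
      simpa [norm_le_zero_iff] using hv.1
    calc volume (Kset 0) ≤ volume ({0} : Set (EuclideanSpace ℝ (Fin 3))) := measure_mono hsub
      _ = 0 := measure_singleton _
      _ ≤ _ := bot_le
  · set r : ℝ := ‖u‖ with hr
    have hr0 : 0 < r := norm_pos_iff.mpr hu
    set s : ℝ := min r (Real.sqrt 2 / r) with hs
    set e : EuclideanSpace ℝ (Fin 3) := r⁻¹ • u with he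
    have hne : ‖e‖ = 1 := by
      rw [he, norm_smul, norm_inv, Real.norm_eq_abs, abs_of_pos hr0]
      field_simp
      exact hr.symm
    have horth : Orthonormal ℝ (Set.restrict {(0 : Fin 3)} (fun _ => e)) := by
      constructor
      · intro i; exact hne
      · intro i j hij
        exact absurd (Subsingleton.elim i j) hij
    obtain ⟨b, hb⟩ := horth.exists_orthonormalBasis_extension_of_card_eq (by simp)
    have hb0 : b 0 = e := hb 0 rfl
    set a : Fin 3 → ℝ := ![r, s, s] with ha
    set Box : Set (EuclideanSpace ℝ (Fin 3)) :=
      (MeasurableEquiv.toLp 2 (Fin 3 → ℝ)).symm ⁻¹'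
        (Set.univ.pi fun i => Set.Icc (-(a i)) (a i)) with hBox
    have hBoxmem : ∀ w : EuclideanSpace ℝ (Fin 3),
        w ∈ Box ↔ ∀ i, -(a i) ≤ w i ∧ w i ≤ a i := by
      intro w
      rw [hBox, Set.mem_preimage, Set.mem_univ_pi]
      exact Iff.rfl
    have hBoxMeas : MeasurableSet Box :=
      (MeasurableEquiv.toLp 2 (Fin 3 → ℝ)).symm.measurable
        (MeasurableSet.univ_pi fun i => measurableSet_Icc)
    have hsub : Kset u ⊆ b.repr ⁻¹' Box := by
      intro v hv
      obtain ⟨hv1, hv2⟩ := hv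
      have hw : ∑ i, (b.repr v i)^2 = ‖v‖^2 := by
        rw [← norm_sq_eq3, b.repr.norm_map]
      have hw0 : b.repr v 0 = ⟪e, v⟫ := by rw [b.repr_apply_apply, hb0]
      have hiuv : ⟪u, v⟫ = r * b.repr v 0 := by
        rw [hw0, he, real_inner_smul_left]
        field_simp
      have hcross : ‖cross3 u v‖^2 = r^2 * (‖v‖^2 - (b.repr v 0)^2) := by
        rw [norm_cross3_sq, hiuv]; ring
      have hsum := hw
      rw [Fin.sum_univ_three] at hsum
      have hvr : ‖v‖^2 ≤ r^2 := by nlinarith [norm_nonneg v]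
      have key : r^2 * ((b.repr v 1)^2 + (b.repr v 2)^2) ≤ 2 := by nlinarith
      obtain ⟨H0, H1, H2⟩ := box_arith hr0 hs hsum hvr key
      rw [Set.mem_preimage, hBoxmem]
      intro i
      fin_cases i
      · simpa [ha] using H0
      · simpa [ha] using H1
      · simpa [ha] using H2
    calc volume (Kset u) ≤ volume (b.repr ⁻¹' Box) := measure_mono hsub
      _ = volume Box := b.measurePreserving_repr.measure_preimage hBoxMeas.nullMeasurableSet
      _ = volume (Set.univ.pi fun i => Set.Icc (-(a i)) (a i)) :=
          (EuclideanSpace.volume_preserving_symm_measurableEquiv_toLp (Fin 3)).measure_preimage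
            (MeasurableSet.univ_pi fun i => measurableSet_Icc).nullMeasurableSet
      _ = ∏ i, volume (Set.Icc (-(a i)) (a i)) := volume_pi_pi _
      _ = ENNReal.ofReal (r + r) * (ENNReal.ofReal (s + s) * ENNReal.ofReal (s + s)) := by
          rw [Fin.prod_univ_three]
          simp only [ha, Matrix.cons_val_zero, Matrix.cons_val_one, Matrix.head_cons,
            Matrix.cons_val_two, Matrix.tail_cons, Real.volume_Icc, sub_neg_eq_add]
          rw [mul_assoc]
      _ = ENNReal.ofReal ((r + r) * ((s + s) * (s + s))) := by
          have hs0 : (0:ℝ) ≤ s + s := by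
            have : 0 < s := lt_min hr0 (by positivity)
            linarith
          rw [← ENNReal.ofReal_mul hs0, ← ENNReal.ofReal_mul (by positivity)]
      _ ≤ ENNReal.ofReal (32 / (1 + r)) := ENNReal.ofReal_le_ofReal (vol_arith hr0 hs)

lemma continuous_cross3 : Continuous fun p : EuclideanSpace ℝ (Fin 3) × EuclideanSpace ℝ (Fin 3) =>
    cross3 p.1 p.2 := by
  apply (PiLp.continuous_toLp 2 (fun _ : Fin 3 => ℝ)).comp
  apply continuous_pi
  intro i
  have h1 : ∀ j, Continuous fun p : EuclideanSpace ℝ (Fin 3) × EuclideanSpace ℝ (Fin 3) =>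
      (WithLp.equiv 2 (Fin 3 → ℝ)) p.1 j :=
    fun j => (continuous_apply j).comp ((PiLp.continuous_ofLp 2 _).comp continuous_fst)
  have h2 : ∀ j, Continuous fun p : EuclideanSpace ℝ (Fin 3) × EuclideanSpace ℝ (Fin 3) =>
      (WithLp.equiv 2 (Fin 3 → ℝ)) p.2 j :=
    fun j => (continuous_apply j).comp ((PiLp.continuous_ofLp 2 _).comp continuous_snd)
  fin_cases i <;>
    simp only [crossProduct, LinearMap.mk₂_apply, Matrix.cons_val_zero, Matrix.cons_val_one,
      Matrix.head_cons, Matrix.cons_val_two, Matrix.tail_cons] <;>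
    exact ((h1 _).mul (h2 _)).sub ((h1 _).mul (h2 _))

lemma measurableSet_Kset_pair {α β : Type*} [MeasurableSpace α] [MeasurableSpace β]
    {f : α × β → EuclideanSpace ℝ (Fin 3)} {g : α × β → EuclideanSpace ℝ (Fin 3)}
    (hf : Measurable f) (hg : Measurable g) :
    MeasurableSet {p : α × β | g p ∈ Kset (f p)} := by
  have hc : Measurable fun p : α × β => ‖cross3 (f p) (g p)‖^2 :=
    ((continuous_cross3.measurable.comp (hf.prodMk hg)).norm).pow_const 2
  exact (measurableSet_le hg.norm hf.norm).inter (measurableSet_le hc measurable_const)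

lemma measurableSet_Kset (u : EuclideanSpace ℝ (Fin 3)) : MeasurableSet (Kset u) := by
  have hc : Measurable fun v : EuclideanSpace ℝ (Fin 3) => ‖cross3 u v‖^2 :=
    ((continuous_cross3.measurable.comp (measurable_const.prodMk measurable_id)).norm).pow_const 2
  exact (measurableSet_le measurable_norm measurable_const).inter
    (measurableSet_le hc measurable_const)

/-- For every integer `D ≥ 5`, the Lebesgue measure of the valley
`Ω = {X ∈ (ℝ³)^D : V_B(X) < 1}` is finite. -/
theorem measure_valley_lt_top (D : ℕ) (hD : 5 ≤ D) :
    volume {X : Fin D → EuclideanSpace ℝ (Fin 3) | VB D X < 1} < ⊤ := by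
  have hD0 : 0 < D := by omega
  set E3 := EuclideanSpace ℝ (Fin 3)
  set A : Fin D → Set (Fin D → E3) := fun k => {X | ∀ i, X i ∈ Kset (X k)} with hA
  -- covering
  have hcover : {X : Fin D → E3 | VB D X < 1} ⊆ ⋃ k, A k := by
    intro X hX
    obtain ⟨k, -, hk⟩ := Finset.exists_max_image Finset.univ (fun i => ‖X i‖)
      ⟨⟨0, hD0⟩, Finset.mem_univ _⟩
    refine Set.mem_iUnion.mpr ⟨k, fun i => ⟨hk i (Finset.mem_univ i), ?_⟩⟩
    have h1 : ∑ j, ‖cross3 (X k) (X j)‖ ^ 2 ≤ ∑ i, ∑ j, ‖cross3 (X i) (X j)‖ ^ 2 :=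
      Finset.single_le_sum (f := fun i => ∑ j, ‖cross3 (X i) (X j)‖ ^ 2)
        (fun i _ => Finset.sum_nonneg fun j _ => sq_nonneg _) (Finset.mem_univ k)
    have h2 : ‖cross3 (X k) (X i)‖ ^ 2 ≤ ∑ j, ‖cross3 (X k) (X j)‖ ^ 2 :=
      Finset.single_le_sum (f := fun j => ‖cross3 (X k) (X j)‖ ^ 2)
        (fun j _ => sq_nonneg _) (Finset.mem_univ i)
    have := hX
    simp only [Set.mem_setOf_eq, VB] at this
    linarith
  refine lt_of_le_of_lt ((measure_mono hcover).trans (measure_iUnion_le _)) ?_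
  -- each A k has finite measure, uniformly
  have key : ∀ k, volume (A k) < ⊤ := by
    intro k
    letI instF : Fintype {x : Fin D // x = k} := Subtype.fintype _
    set e := MeasurableEquiv.piEquivPiSubtypeProd (fun _ : Fin D => E3) (· = k) with he
    set N := Fintype.card {i : Fin D // ¬ i = k} with hN
    have hNval : N = D - 1 := by
      rw [hN, Fintype.card_subtype_compl, Fintype.card_subtype_eq, Fintype.card_fin]
    have hN4 : 4 ≤ N := by omega
    set S : Set ((∀ _ : {i : Fin D // i = k}, E3) × (∀ _ : {i : Fin D // ¬ i = k}, E3)) :=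
      {p | ∀ i : {i : Fin D // ¬ i = k}, p.2 i ∈ Kset (p.1 default)} with hS
    have hSmeas : MeasurableSet S := by
      have  hSi : S = ⋂ i : {i : Fin D // ¬ i = k}, {p : (∀ _ : {i : Fin D // i = k}, E3) ×
          (∀ _ : {i : Fin D // ¬ i = k}, E3) | p.2 i ∈ Kset (p.1 default)} := by
        ext p; simp [hS, Set.mem_iInter]
      rw [hSi]
      exact MeasurableSet.iInter fun i =>
        measurableSet_Kset_pair ((measurable_pi_apply _).comp measurable_fst)
          ((measurable_pi_apply _).comp measurable_snd)
    have hsub : A k ⊆ e ⁻¹' S := by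
      intro X hX
      exact fun i => hX i.1
    have hmp : MeasurePreserving e volume volume :=
      volume_preserving_piEquivPiSubtypeProd (fun _ : Fin D => E3) (· = k)
    have h1 : volume (A k) ≤ volume (e ⁻¹' S) := measure_mono hsub
    rw [hmp.measure_preimage hSmeas.nullMeasurableSet] at h1
    -- Fubini
    have h2 : (volume : Measure ((∀ _ : {i : Fin D // i = k}, E3) ×
        (∀ _ : {i : Fin D // ¬ i = k}, E3))) S
        = ∫⁻ y, volume (Prod.mk y ⁻¹' S) := by
      exact Measure.prod_apply hSmeas
    have h3 : ∀ y : ∀ _ : {i : Fin D // i = k}, E3,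
        volume (Prod.mk y ⁻¹' S) = volume (Kset (y default)) ^ N := by
      intro y
      have hsec : Prod.mk y ⁻¹' S = Set.univ.pi fun _ : {i : Fin D // ¬ i = k} =>
          Kset (y default) := by
        ext z; simp [hS, Set.mem_univ_pi]
      rw [hsec, volume_pi_pi, Finset.prod_const, Finset.card_univ]
    set C : ENNReal := ∫⁻ u : E3, (ENNReal.ofReal (32 / (1 + ‖u‖))) ^ N with hC
    have h4 : (volume : Measure _) S ≤ C := by
      rw [h2]
      have hb : ∀ y : ∀ _ : {i : Fin D // i = k}, E3,
          volume (Prod.mk y ⁻¹' S) ≤ (ENNReal.ofReal (32 / (1 + ‖y default‖))) ^ N := by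
        intro y
        rw [h3]
        exact pow_le_pow_left' (volume_Kset_le _) N
      calc (∫⁻ y, volume (Prod.mk y ⁻¹' S))
          ≤ ∫⁻ y, (ENNReal.ofReal (32 / (1 + ‖y default‖))) ^ N := lintegral_mono hb
        _ = C := by
            rw [hC]
            have hmeasf : Measurable fun u : E3 => (ENNReal.ofReal (32 / (1 + ‖u‖))) ^ N := by
              apply Measurable.pow_const
              apply ENNReal.measurable_ofReal.comp
              have : Continuous fun u : E3 => 32 / (1 + ‖u‖) :=
                continuous_const.div (by continuity) (fun u => by positivity)
              exact this.measurable
            have hthis := (measurePreserving_funUnique (volume : Measure E3)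
              {i : Fin D // i = k}).lintegral_comp hmeasf
            rw [show (volume : Measure ({i : Fin D // i = k} → E3))
              = Measure.pi fun _ => volume from volume_pi]
            rw [Subsingleton.elim (Unique.fintype : Fintype {i : Fin D // i = k}) instF] at hthis
            simpa [MeasurableEquiv.funUnique] using hthis
    -- the integral is finite
    have hCfin : C < ⊤ := by
      have hfr : ((Module.finrank ℝ E3 : ℝ)) < (N : ℝ) := by
        rw [finrank_euclideanSpace_fin]
        exact_mod_cast by omega
      have hjap := finite_integral_one_add_norm (μ := (volume : Measure E3)) hfr
      have heq : ∀ u : E3, (ENNReal.ofReal (32 / (1 + ‖u‖))) ^ N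
          = ENNReal.ofReal ((32:ℝ) ^ N) * ENNReal.ofReal ((1 + ‖u‖) ^ (-(N:ℝ))) := by
        intro u
        have h1u : (0:ℝ) < 1 + ‖u‖ := by positivity
        rw [← ENNReal.ofReal_pow (by positivity), ← ENNReal.ofReal_mul (by positivity)]
        congr 1
        rw [div_pow, Real.rpow_neg h1u.le, Real.rpow_natCast]
        field_simp
      rw [hC]
      simp_rw [heq]
      rw [lintegral_const_mul _ (by fun_prop)]
      exact ENNReal.mul_lt_top ENNReal.ofReal_lt_top hjap
    exact lt_of_le_of_lt (h1.trans h4) hCfin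
  rw [tsum_fintype]
  exact ENNReal.sum_lt_top.mpr fun k _ => key k
end

section
/- For every integer D ≥ 5, the Lebesgue measure μ(Ω_{a₀}) of the truncated valley Ω_{a₀} = {X ∈ (ℝ³)^D : V_B(X) < 1 and |X| ≥ a₀} tends to 0 as a₀ → ∞. -/
open MeasureTheory Filter

/-- The Euclidean norm of a configuration `X = (X₁, …, X_D)` viewed as a point
of `ℝ^{3D}`. -/
noncomputable def confNorm (D : ℕ) (X : Fin D → EuclideanSpace ℝ (Fin 3)) : ℝ :=
  Real.sqrt (∑ i, ‖X i‖ ^ 2)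

namespace MembraneValley

local notation "E3" => EuclideanSpace ℝ (Fin 3)

/-- Lagrange's identity for the cross product. -/
lemma norm_cross3_sq (v w : E3) :
    ‖cross3 v w‖ ^ 2 = ‖v‖ ^ 2 * ‖w‖ ^ 2 - (inner ℝ v w : ℝ) ^ 2 := by
  rw [← real_inner_self_eq_norm_sq, ← real_inner_self_eq_norm_sq,
    ← real_inner_self_eq_norm_sq]
  simp only [cross3, PiLp.inner_apply, RCLike.inner_apply, conj_trivial,
    WithLp.equiv_symm_apply, PiLp.toLp_apply, WithLp.equiv_apply, cross_apply, Fin.sum_univ_three,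
    Matrix.cons_val_zero, Matrix.cons_val_one, Matrix.head_cons, Matrix.cons_val_two,
    Matrix.tail_cons]
  ring

lemma norm_sq_E3 (z : E3) : ‖z‖ ^ 2 = z 0 ^ 2 + z 1 ^ 2 + z 2 ^ 2 := by
  rw [← real_inner_self_eq_norm_sq]
  simp only [PiLp.inner_apply, RCLike.inner_apply, conj_trivial, Fin.sum_univ_three]
  ring

/-- The volume of the box `{z : |z 0| ≤ a, |z 1| ≤ a, |z 2| ≤ b}`. -/
lemma volume_box (a b : ℝ) :
    volume {z : E3 | |z 0| ≤ a ∧ |z 1| ≤ a ∧ |z 2| ≤ b}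
      = ENNReal.ofReal (2 * a) * ENNReal.ofReal (2 * a) * ENNReal.ofReal (2 * b) := by
  have : {z : E3 | |z 0| ≤ a ∧ |z 1| ≤ a ∧ |z 2| ≤ b}
      = (MeasurableEquiv.toLp 2 (Fin 3 → ℝ)).symm ⁻¹'
        (Set.univ.pi fun i => Set.Icc (-(![a,a,b] i)) (![a,a,b] i)) := by
    ext z
    simp only [Set.mem_preimage, Set.mem_pi, Set.mem_univ, true_implies, Set.mem_Icc,
      MeasurableEquiv.coe_toLp_symm, MeasurableEquiv.coe_mk, Equiv.coe_fn_mk,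
      WithLp.equiv_apply, Fin.forall_fin_succ, Set.mem_setOf_eq,
      Matrix.cons_val_zero, Matrix.cons_val_one, Matrix.head_cons, Matrix.cons_val_two,
      Matrix.tail_cons, abs_le, Fin.succ_zero_eq_one, Fin.succ_one_eq_two]
    constructor
    · rintro ⟨h0, h1, h2⟩; exact ⟨h0, h1, h2, fun i => i.elim0⟩
    · rintro ⟨h0, h1, h2, -⟩; exact ⟨h0, h1, h2⟩
  rw [this, (EuclideanSpace.volume_preserving_symm_measurableEquiv_toLp (Fin 3)).measure_preimage
      (MeasurableSet.univ_pi fun i => measurableSet_Icc).nullMeasurableSet,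
    volume_pi_pi]
  simp only [Real.volume_Icc, Fin.prod_univ_three, Matrix.cons_val_zero, Matrix.cons_val_one,
    Matrix.head_cons, Matrix.cons_val_two, Matrix.tail_cons]
  congr 1
  · congr 1 <;> ring_nf
  · ring_nf

/-- The basic fiber set: vectors `w` with `‖v × w‖² ≤ 2` (in Lagrange form)
and `‖w‖ ≤ ‖v‖`. -/
def Bv (v : E3) : Set E3 :=
  {w | ‖v‖ ^ 2 * ‖w‖ ^ 2 - (inner ℝ v w : ℝ) ^ 2 ≤ 2 ∧ ‖w‖ ≤ ‖v‖}

/-- The joint version of `Bv` as a subset of pairs. -/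
def K : Set (E3 × E3) :=
  {q | ‖q.1‖ ^ 2 * ‖q.2‖ ^ 2 - (inner ℝ q.1 q.2 : ℝ) ^ 2 ≤ 2 ∧ ‖q.2‖ ≤ ‖q.1‖}

lemma isClosed_K : IsClosed K := by
  have h1 : Continuous fun q : E3 × E3 => ‖q.1‖ ^ 2 * ‖q.2‖ ^ 2 - (inner ℝ q.1 q.2 : ℝ) ^ 2 :=
    ((continuous_fst.norm.pow 2).mul (continuous_snd.norm.pow 2)).sub
      ((continuous_fst.inner continuous_snd).pow 2)
  exact (isClosed_le h1 continuous_const).inter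
    (isClosed_le continuous_snd.norm continuous_fst.norm)

lemma Bv_eq_preimage (v : E3) : Bv v = Prod.mk v ⁻¹' K := rfl

lemma isClosed_Bv (v : E3) : IsClosed (Bv v) := by
  rw [Bv_eq_preimage]
  exact isClosed_K.preimage (Continuous.prodMk_right v)

lemma self_mem_Bv (v : E3) : v ∈ Bv v := by
  constructor
  · have : ‖v‖ ^ 2 * ‖v‖ ^ 2 - (inner ℝ v v : ℝ) ^ 2 = 0 := by
      rw [real_inner_self_eq_norm_sq]; ring
    rw [this]; norm_num
  · exact le_refl _

lemma measure_Bv_le (v : E3) (hv : v ≠ 0) :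
    volume (Bv v) ≤ ENNReal.ofReal (16 / ‖v‖) := by
  set r := ‖v‖ with hrdef
  have hr0 : 0 < r := norm_pos_iff.2 hv
  set e : E3 := EuclideanSpace.single 2 (1:ℝ) with he_def
  have he : ‖e‖ = 1 := by simp [he_def, EuclideanSpace.norm_single]
  have hu : ‖r⁻¹ • v‖ = 1 := by
    rw [norm_smul, Real.norm_eq_abs, abs_of_pos (inv_pos.2 hr0), ← hrdef]
    field_simp
  obtain ⟨f, hf⟩ : ∃ f : E3 ≃ₗᵢ[ℝ] E3, f e = r⁻¹ • v :=
    ⟨Submodule.reflection (ℝ ∙ (e - r⁻¹ • v))ᗮ, Submodule.reflection_sub (by rw [he, hu])⟩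
  set C : Set E3 := {z | r ^ 2 * (‖z‖ ^ 2 - (z 2) ^ 2) ≤ 2 ∧ ‖z‖ ≤ r} with hC
  have hmem : ∀ z : E3, f z ∈ Bv v ↔ z ∈ C := by
    intro z
    have h1 : (inner ℝ v (f z) : ℝ) = r * z 2 := by
      calc (inner ℝ v (f z) : ℝ) = (inner ℝ ((r : ℝ) • (r⁻¹ • v)) (f z) : ℝ) := by
            rw [smul_inv_smul₀ (ne_of_gt hr0)]
        _ = r * (inner ℝ (r⁻¹ • v) (f z) : ℝ) := real_inner_smul_left _ _ _
        _ = r * (inner ℝ (f e) (f z) : ℝ) := by rw [hf]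
        _ = r * (inner ℝ e z : ℝ) := by rw [f.inner_map_map]
        _ = r * z 2 := by rw [he_def, EuclideanSpace.inner_single_left]; simp
    have h2 : r ^ 2 * ‖z‖ ^ 2 - (r * z 2) ^ 2 = r ^ 2 * (‖z‖ ^ 2 - (z 2) ^ 2) := by ring
    simp only [Bv, hC, Set.mem_setOf_eq, f.norm_map, h1, ← hrdef, h2]
  have hBC : Bv v = f.symm ⁻¹' C := by
    ext w
    rw [Set.mem_preimage, ← hmem (f.symm w), f.apply_symm_apply]
  have hCclosed : IsClosed C := by
    apply IsClosed.inter
    · have hcont : Continuous fun z : E3 => r ^ 2 * (‖z‖ ^ 2 - (z 2) ^ 2) := by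
        have h2 : Continuous fun z : E3 => z 2 :=
          (continuous_apply (2 : Fin 3)).comp (PiLp.continuous_ofLp 2 fun _ : Fin 3 => ℝ)
        fun_prop
      exact isClosed_le hcont continuous_const
    · exact isClosed_le continuous_norm continuous_const
  have hvolC : volume (Bv v) = volume C := by
    rw [hBC, f.symm.measurePreserving.measure_preimage hCclosed.measurableSet.nullMeasurableSet]
  rw [hvolC]
  have hsub : C ⊆ {z : E3 | |z 0| ≤ Real.sqrt 2 / r ∧ |z 1| ≤ Real.sqrt 2 / r ∧ |z 2| ≤ r} := by
    rintro z ⟨h1, h2⟩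
    have hz : ‖z‖ ^ 2 - (z 2) ^ 2 = z 0 ^ 2 + z 1 ^ 2 := by rw [norm_sq_E3]; ring
    rw [hz] at h1
    have hs2 : ((2:ℝ) / r ^ 2) = (Real.sqrt 2 / r) ^ 2 := by
      rw [div_pow, Real.sq_sqrt (by norm_num : (0:ℝ) ≤ 2)]
    have key : ∀ x : ℝ, x ^ 2 ≤ 2 / r ^ 2 → |x| ≤ Real.sqrt 2 / r := by
      intro x hx
      calc |x| = Real.sqrt (x ^ 2) := (Real.sqrt_sq_eq_abs x).symm
        _ ≤ Real.sqrt ((Real.sqrt 2 / r) ^ 2) := Real.sqrt_le_sqrt (by rw [← hs2]; exact hx)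
        _ = Real.sqrt 2 / r := Real.sqrt_sq (by positivity)
    refine ⟨key _ ?_, key _ ?_, ?_⟩
    · rw [le_div_iff₀ (by positivity)]; nlinarith [sq_nonneg (z 1)]
    · rw [le_div_iff₀ (by positivity)]; nlinarith [sq_nonneg (z 0)]
    · calc |z 2| = Real.sqrt ((z 2) ^ 2) := (Real.sqrt_sq_eq_abs _).symm
        _ ≤ Real.sqrt (r ^ 2) := Real.sqrt_le_sqrt (by nlinarith [norm_nonneg z])
        _ = r := Real.sqrt_sq hr0.le
  calc volume C ≤ volume {z : E3 | |z 0| ≤ Real.sqrt 2 / r ∧ |z 1| ≤ Real.sqrt 2 / r ∧ |z 2| ≤ r} :=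
        measure_mono hsub
    _ = ENNReal.ofReal (2 * (Real.sqrt 2 / r)) * ENNReal.ofReal (2 * (Real.sqrt 2 / r)) *
        ENNReal.ofReal (2 * r) := volume_box _ _
    _ = ENNReal.ofReal (16 / r) := by
        rw [← ENNReal.ofReal_mul (by positivity), ← ENNReal.ofReal_mul (by positivity)]
        congr 1
        have h2 : Real.sqrt 2 ^ 2 = 2 := Real.sq_sqrt (by norm_num)
        field_simp
        nlinarith [h2]

lemma VB_eq (D : ℕ) (X : Fin D → E3) :
    VB D X = (1 / 2) * ∑ i, ∑ j, (‖X i‖ ^ 2 * ‖X j‖ ^ 2 - (inner ℝ (X i) (X j) : ℝ) ^ 2) := by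
  unfold VB
  congr 1
  exact Finset.sum_congr rfl fun i _ => Finset.sum_congr rfl fun j _ => norm_cross3_sq _ _

lemma continuous_VB (D : ℕ) : Continuous (VB D) := by
  have : VB D = fun X : Fin D → E3 =>
      (1 / 2) * ∑ i, ∑ j, (‖X i‖ ^ 2 * ‖X j‖ ^ 2 - (inner ℝ (X i) (X j) : ℝ) ^ 2) :=
    funext fun X => VB_eq D X
  rw [this]
  refine continuous_const.mul (continuous_finset_sum _ fun i _ => continuous_finset_sum _
    fun j _ => Continuous.sub ?_ ?_)
  · exact (((continuous_apply i).norm.pow 2).mul ((continuous_apply j).norm.pow 2))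
  · exact (Continuous.inner (continuous_apply i) (continuous_apply j)).pow 2

lemma continuous_confNorm (D : ℕ) : Continuous (confNorm D) := by
  unfold confNorm
  exact (continuous_finset_sum _ fun i _ => (continuous_apply i).norm.pow 2).sqrt

/-- The key finiteness: for `n ≥ 4` the valley `{V_B < 1, |X| ≥ 1}` in
`(ℝ³)^{n+1}` has finite volume. -/
lemma finite_meas (n : ℕ) (hn : 4 ≤ n) :
    volume {X : Fin (n+1) → E3 | VB (n+1) X < 1 ∧ 1 ≤ confNorm (n+1) X} ≠ ⊤ := by
  classical
  set A : Set E3 := {v | (1:ℝ) / (n+1) ≤ ‖v‖ ^ 2} with hA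
  have hAclosed : IsClosed A := isClosed_le continuous_const (continuous_norm.pow 2)
  set S : Fin (n+1) → Set (Fin (n+1) → E3) := fun i₀ =>
    {X | X i₀ ∈ A ∧ ∀ j, X j ∈ Bv (X i₀)} with hS
  -- inclusion into the union
  have hsub : {X : Fin (n+1) → E3 | VB (n+1) X < 1 ∧ 1 ≤ confNorm (n+1) X} ⊆ ⋃ i₀, S i₀ := by
    rintro X ⟨hVB, hcn⟩
    obtain ⟨i₀, -, hmax⟩ := Finset.exists_max_image Finset.univ (fun i => ‖X i‖)
      ⟨0, Finset.mem_univ 0⟩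
    refine Set.mem_iUnion.2 ⟨i₀, ?_, fun j => ⟨?_, hmax j (Finset.mem_univ j)⟩⟩
    · have h1 : (1:ℝ) ≤ ∑ i, ‖X i‖ ^ 2 := by
        have h := hcn
        unfold confNorm at h
        exact Real.one_le_sqrt.mp h
      have h2 : ∑ i, ‖X i‖ ^ 2 ≤ (n+1) * ‖X i₀‖ ^ 2 := by
        calc ∑ i, ‖X i‖ ^ 2 ≤ ∑ _i : Fin (n+1), ‖X i₀‖ ^ 2 :=
              Finset.sum_le_sum fun i _ => by
                have := hmax i (Finset.mem_univ i)
                nlinarith [norm_nonneg (X i)]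
          _ = (n+1) * ‖X i₀‖ ^ 2 := by
              rw [Finset.sum_const, Finset.card_univ, Fintype.card_fin, nsmul_eq_mul]
              push_cast; ring
      rw [hA, Set.mem_setOf_eq, div_le_iff₀ (by positivity)]
      nlinarith
    · -- the Lagrange quantity is at most 2
      show ‖X i₀‖ ^ 2 * ‖X j‖ ^ 2 - (inner ℝ (X i₀) (X j) : ℝ) ^ 2 ≤ 2
      rw [← norm_cross3_sq]
      have hle1 : ‖cross3 (X i₀) (X j)‖ ^ 2 ≤ ∑ j', ‖cross3 (X i₀) (X j')‖ ^ 2 :=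
          Finset.single_le_sum (f := fun j' => ‖cross3 (X i₀) (X j')‖ ^ 2)
          (fun _ _ => sq_nonneg _) (Finset.mem_univ j)
      have hle2 : ∑ j', ‖cross3 (X i₀) (X j')‖ ^ 2
          ≤ ∑ i, ∑ j', ‖cross3 (X i) (X j')‖ ^ 2 :=
        Finset.single_le_sum (f := fun i => ∑ j', ‖cross3 (X i) (X j')‖ ^ 2)
          (fun i _ => Finset.sum_nonneg fun _ _ => sq_nonneg _) (Finset.mem_univ i₀)
      have h2VB : ∑ i, ∑ j', ‖cross3 (X i) (X j')‖ ^ 2 = 2 * VB (n+1) X := by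
        unfold VB; ring
      linarith
  -- each S i₀ has finite measure
  have hSfin : ∀ i₀, volume (S i₀) < ⊤ := by
    intro i₀
    set T : Set (E3 × (Fin n → E3)) :=
      {p | p.1 ∈ A} ∩ ⋂ j : Fin n, {p | p.2 j ∈ Bv p.1} with hT
    have hTclosed : IsClosed T := by
      refine IsClosed.inter (hAclosed.preimage continuous_fst) (isClosed_iInter fun j => ?_)
      have hc2 : Continuous fun p : E3 × (Fin n → E3) => p.2 j :=
        (continuous_apply j).comp continuous_snd
      have : {p : E3 × (Fin n → E3) | p.2 j ∈ Bv p.1}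
          = (fun p : E3 × (Fin n → E3) => (p.1, p.2 j)) ⁻¹' K := rfl
      rw [this]
      exact isClosed_K.preimage (continuous_fst.prodMk hc2)
    have hpre : S i₀ = (MeasurableEquiv.piFinSuccAbove (fun _ : Fin (n+1) => E3) i₀) ⁻¹' T := by
      ext X
      simp only [hS, hT, Set.mem_setOf_eq, Set.mem_preimage, Set.mem_inter_iff,
        Set.mem_iInter, MeasurableEquiv.piFinSuccAbove_apply, Fin.insertNthEquiv_symm_apply,
        Fin.removeNth]
      constructor
      · rintro ⟨h1, h2⟩; exact ⟨h1, fun j => h2 _⟩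
      · rintro ⟨h1, h2⟩
        exact ⟨h1, (Fin.forall_iff_succAbove i₀).2 ⟨self_mem_Bv _, h2⟩⟩
    have hvol : volume (S i₀)
        = ((volume : Measure E3).prod (Measure.pi fun _ : Fin n => (volume : Measure E3))) T := by
      rw [hpre, show (volume : Measure (Fin (n+1) → E3)) = Measure.pi fun _ => volume from rfl]
      exact (measurePreserving_piFinSuccAbove (fun _ : Fin (n+1) => (volume : Measure E3))
        i₀).measure_preimage hTclosed.measurableSet.nullMeasurableSet
    rw [hvol, Measure.prod_apply hTclosed.measurableSet]
    have hfiber : ∀ v : E3, (Measure.pi fun _ : Fin n => (volume : Measure E3))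
        (Prod.mk v ⁻¹' T) = A.indicator (fun v => volume (Bv v) ^ n) v := by
      intro v
      by_cases hv : v ∈ A
      · rw [Set.indicator_of_mem hv]
        have : Prod.mk v ⁻¹' T = Set.univ.pi fun _ : Fin n => Bv v := by
          ext Y
          simp [hT, hv, Set.mem_pi]
        rw [this, Measure.pi_pi]
        simp [Finset.prod_const, Finset.card_univ]
      · rw [Set.indicator_of_notMem hv]
        have : Prod.mk v ⁻¹' T = ∅ := by
          ext Y; simp [hT, hv]
        simp [this]
    rw [lintegral_congr hfiber, lintegral_indicator hAclosed.measurableSet]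
    -- now bound the integral
    set ρ : ℝ := Real.sqrt (1 / (n+1)) with hρ
    have hρ0 : 0 < ρ := Real.sqrt_pos.2 (by positivity)
    set c : ℝ := 16 * (1 + ρ⁻¹) with hc
    have hc0 : 0 < c := by positivity
    have hbound : ∀ v ∈ A, volume (Bv v) ^ n
        ≤ ENNReal.ofReal (c ^ n * (1 + ‖v‖) ^ (-(n:ℝ))) := by
      intro v hv
      have hρv : ρ ≤ ‖v‖ := by
        rw [hρ]
        calc Real.sqrt (1/(n+1)) ≤ Real.sqrt (‖v‖ ^ 2) := Real.sqrt_le_sqrt hv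
          _ = ‖v‖ := Real.sqrt_sq (norm_nonneg v)
      have hv0 : 0 < ‖v‖ := lt_of_lt_of_le hρ0 hρv
      have hvne : v ≠ 0 := by simpa [norm_pos_iff] using hv0
      have h16 : 16 / ‖v‖ ≤ c / (1 + ‖v‖) := by
        rw [div_le_div_iff₀ hv0 (by positivity), hc]
        have : 1 + ‖v‖ ≤ (1 + ρ⁻¹) * ‖v‖ := by
          have h1 : 1 ≤ ρ⁻¹ * ‖v‖ := by
            calc (1:ℝ) = ρ⁻¹ * ρ := by field_simp
              _ ≤ ρ⁻¹ * ‖v‖ := by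
                  apply mul_le_mul_of_nonneg_left hρv (by positivity)
          nlinarith
        nlinarith
      have hstep : volume (Bv v) ≤ ENNReal.ofReal (c / (1 + ‖v‖)) :=
        (measure_Bv_le v hvne).trans (ENNReal.ofReal_le_ofReal h16)
      calc volume (Bv v) ^ n ≤ ENNReal.ofReal (c / (1 + ‖v‖)) ^ n := pow_le_pow_left' hstep n
        _ = ENNReal.ofReal ((c / (1 + ‖v‖)) ^ n) := (ENNReal.ofReal_pow (by positivity) n).symm
        _ = ENNReal.ofReal (c ^ n * (1 + ‖v‖) ^ (-(n:ℝ))) := by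
            congr 1
            rw [Real.rpow_neg (by positivity), Real.rpow_natCast, div_pow]
            field_simp
    have hmeasg : Measurable fun v : E3 => ENNReal.ofReal (c ^ n * (1 + ‖v‖) ^ (-(n:ℝ))) := by
      apply ENNReal.measurable_ofReal.comp
      fun_prop
    calc ∫⁻ v in A, volume (Bv v) ^ n
        ≤ ∫⁻ v in A, ENNReal.ofReal (c ^ n * (1 + ‖v‖) ^ (-(n:ℝ))) := setLIntegral_mono hmeasg hbound
      _ ≤ ∫⁻ v, ENNReal.ofReal (c ^ n * (1 + ‖v‖) ^ (-(n:ℝ))) := setLIntegral_le_lintegral _ _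
      _ = ENNReal.ofReal (c ^ n) * ∫⁻ v, ENNReal.ofReal ((1 + ‖v‖) ^ (-(n:ℝ))) := by
          rw [← lintegral_const_mul' _ _ ENNReal.ofReal_ne_top]
          congr 1 with v
          rw [← ENNReal.ofReal_mul (by positivity)]
      _ < ⊤ := ENNReal.mul_lt_top ENNReal.ofReal_lt_top
          (finite_integral_one_add_norm (by
            rw [finrank_euclideanSpace_fin]
            exact_mod_cast by omega))
  -- conclude
  have htotal : volume {X : Fin (n+1) → E3 | VB (n+1) X < 1 ∧ 1 ≤ confNorm (n+1) X}
      ≤ ∑ i₀ : Fin (n+1), volume (S i₀) :=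
    (measure_mono hsub).trans ((measure_iUnion_le S).trans (by rw [tsum_fintype]))
  exact ne_top_of_le_ne_top (ENNReal.sum_lt_top.2 fun i₀ _ => hSfin i₀).ne htotal

end MembraneValley

open MembraneValley in
/-- For every integer `D ≥ 5`, the Lebesgue measure of the truncated valley
`Ω_{a₀} = {X ∈ (ℝ³)^D : V_B(X) < 1, |X| ≥ a₀}` tends to `0` as `a₀ → ∞`. -/
theorem measure_truncated_valley_tendsto_zero (D : ℕ) (hD : 5 ≤ D) :
    Tendsto
      (fun a₀ : ℝ =>
        volume {X : Fin D → EuclideanSpace ℝ (Fin 3) | VB D X < 1 ∧ a₀ ≤ confNorm D X})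
      atTop (nhds 0) := by
  obtain ⟨n, rfl⟩ : ∃ n, D = n + 1 := ⟨D - 1, by omega⟩
  have hn : 4 ≤ n := by omega
  set s : ℝ → Set (Fin (n+1) → EuclideanSpace ℝ (Fin 3)) := fun a₀ =>
    {X | VB (n+1) X < 1 ∧ a₀ ≤ confNorm (n+1) X} with hs
  have hmeas : ∀ a₀, NullMeasurableSet (s a₀) volume := by
    intro a₀
    have : s a₀ = {X | VB (n+1) X < 1} ∩ {X | a₀ ≤ confNorm (n+1) X} := rfl
    rw [this]
    exact (((isOpen_lt (continuous_VB _) continuous_const).measurableSet).inter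
      ((isClosed_le continuous_const (continuous_confNorm _)).measurableSet)).nullMeasurableSet
  have hanti : Antitone s := fun a b hab X hX => ⟨hX.1, le_trans hab hX.2⟩
  have hfin : ∃ a₀ : ℝ, volume (s a₀) ≠ ⊤ := ⟨1, finite_meas n hn⟩
  have h := tendsto_measure_iInter_atTop hmeas hanti hfin
  have hempty : ⋂ a₀, s a₀ = ∅ := by
    ext X
    simp only [Set.mem_iInter, Set.mem_empty_iff_false, iff_false, not_forall]
    refine ⟨confNorm (n+1) X + 1, fun hX => ?_⟩
    have := hX.2
    linarith
  rw [hempty] at h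
  simp at h; exact h
end

section
/- For every integer D > 5, the integral of the Euclidean norm over the valley is finite: ∫_Ω |X| dμ(X) < ∞, where Ω = {X ∈ (ℝ³)^D : V_B(X) < 1}. -/
open MeasureTheory
open scoped ENNReal NNReal

local notation "E3" => EuclideanSpace ℝ (Fin 3)

noncomputable def Qf (x y : E3) : ℝ := ‖x‖^2 * ‖y‖^2 - (inner ℝ x y : ℝ)^2

lemma norm_sq_eq_dot (v : E3) :
    ‖v‖^2 = dotProduct (WithLp.equiv 2 (Fin 3 → ℝ) v) (WithLp.equiv 2 (Fin 3 → ℝ) v) := by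
  rw [EuclideanSpace.norm_eq, Real.sq_sqrt (by positivity)]
  simp [dotProduct, sq]

lemma inner_eq_dot (x y : E3) :
    (inner ℝ x y : ℝ) = dotProduct (WithLp.equiv 2 (Fin 3 → ℝ) x) (WithLp.equiv 2 (Fin 3 → ℝ) y) := by
  simp [PiLp.inner_apply, dotProduct, RCLike.inner_apply, mul_comm]

lemma cross3_norm_sq (x y : E3) : ‖cross3 x y‖^2 = Qf x y := by
  rw [Qf, norm_sq_eq_dot, norm_sq_eq_dot, norm_sq_eq_dot, inner_eq_dot, cross3]
  rw [Equiv.apply_symm_apply]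
  rw [cross_dot_cross, dotProduct_comm ((WithLp.equiv 2 (Fin 3 → ℝ)) y) ((WithLp.equiv 2 (Fin 3 → ℝ)) x)]
  ring

set_option maxHeartbeats 2000000 in
lemma volume_A_le (x : E3) :
    volume {y : E3 | ‖y‖ ≤ ‖x‖ ∧ Qf x y < 2}
      ≤ ENNReal.ofReal (16 * min (‖x‖^3) (‖x‖⁻¹)) := by
  rcases eq_or_ne x 0 with rfl | hx
  · have : {y : E3 | ‖y‖ ≤ ‖(0:E3)‖ ∧ Qf 0 y < 2} ⊆ {(0:E3)} := by
      intro y hy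
      simp only [Set.mem_setOf_eq, norm_zero, norm_le_zero_iff] at hy
      simp [hy.1]
    calc volume {y : E3 | ‖y‖ ≤ ‖(0:E3)‖ ∧ Qf 0 y < 2} ≤ volume {(0:E3)} := measure_mono this
    _ = 0 := measure_singleton _
    _ ≤ _ := by simp
  · set r := ‖x‖ with hr_def
    have hr : 0 < r := norm_pos_iff.mpr hx
    set u : E3 := r⁻¹ • x with hu_def
    have hu_norm : ‖u‖ = 1 := by
      rw [hu_def, norm_smul, norm_inv, norm_norm, ← hr_def, inv_mul_cancel₀ hr.ne']
    have hxu : x = r • u := by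
      rw [hu_def, smul_smul, mul_inv_cancel₀ hr.ne', one_smul]
    have hON : Orthonormal ℝ (Set.restrict {0} (fun _ : Fin 3 => u)) := by
      refine ⟨fun i => hu_norm, fun {i j} hij => absurd ?_ hij⟩
      ext
      have h1 : i.1 ∈ ({0} : Set (Fin 3)) := i.2
      have h2 : j.1 ∈ ({0} : Set (Fin 3)) := j.2
      simp only [Set.mem_singleton_iff] at h1 h2
      rw [h1, h2]
    obtain ⟨b, hb⟩ := hON.exists_orthonormalBasis_extension_of_card_eq
      (by simp [finrank_euclideanSpace_fin])
    have hb0 : b 0 = u := hb 0 rfl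
    set m : ℝ := min r (Real.sqrt 2 / r) with hm_def
    have hm0 : 0 ≤ m := le_min hr.le (by positivity)
    have hm1 : m ≤ r := min_le_left _ _
    have hm2 : m ≤ Real.sqrt 2 / r := min_le_right _ _
    have hs2 : Real.sqrt 2 ^ 2 = 2 := Real.sq_sqrt (by norm_num)
    have hmm2 : m * m ≤ 2 / r ^ 2 := by
      have h1 : m * m ≤ (Real.sqrt 2 / r) * (Real.sqrt 2 / r) :=
        mul_le_mul hm2 hm2 hm0 (by positivity)
      have h2 : (Real.sqrt 2 / r) * (Real.sqrt 2 / r) = 2 / r ^ 2 := by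
        rw [div_mul_div_comm, ← sq, ← sq, hs2]
      linarith
    set c : Fin 3 → ℝ := ![r, m, m] with hc_def
    set B : Set E3 := (MeasurableEquiv.toLp 2 (Fin 3 → ℝ)).symm ⁻¹'
      (Set.univ.pi fun k => Set.Icc (-(c k)) (c k)) with hB_def
    have hsub : {y : E3 | ‖y‖ ≤ ‖x‖ ∧ Qf x y < 2} ⊆ b.repr ⁻¹' B := by
      intro y hy
      obtain ⟨hy1, hy2⟩ := hy
      set z := b.repr y with hz_def
      have hnorm : z 0 ^ 2 + z 1 ^ 2 + z 2 ^ 2 = ‖y‖^2 := by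
        have h1 : ‖z‖ = ‖y‖ := b.repr.norm_map y
        have h2 : ‖z‖^2 = ∑ k, z k ^ 2 := by
          rw [EuclideanSpace.norm_eq, Real.sq_sqrt (by positivity)]
          simp [sq_abs]
        rw [← h1, h2, Fin.sum_univ_three]
      have hz0 : z 0 = (inner ℝ u y : ℝ) := by
        rw [hz_def, b.repr_apply_apply, hb0]
      have hinner : (inner ℝ x y : ℝ) = r * z 0 := by
        rw [hz0, hxu, real_inner_smul_left]
      have hQ : Qf x y = r^2 * (z 1 ^ 2 + z 2 ^ 2) := by
        rw [Qf, hinner, ← hr_def, ← hnorm]; ring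
      have h12 : z 1 ^ 2 + z 2 ^ 2 < 2 / r^2 := by
        rw [lt_div_iff₀ (by positivity)]
        nlinarith [hQ, hy2]
      have habs0 : |z 0| ≤ r := by
        rw [hz0]
        calc |(inner ℝ u y : ℝ)| ≤ ‖u‖ * ‖y‖ := abs_real_inner_le_norm u y
        _ = ‖y‖ := by rw [hu_norm, one_mul]
        _ ≤ r := hy1
      have hyr : ‖y‖ ^ 2 ≤ r ^ 2 := by nlinarith [norm_nonneg y]
      have key : ∀ k, z k ^ 2 ≤ r ^ 2 → z k ^ 2 ≤ 2 / r ^ 2 → z k ∈ Set.Icc (-m) m := by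
        intro k h1 h2
        have habs : |z k| ≤ m := by
          refine le_min ?_ ?_
          · calc |z k| = Real.sqrt (z k ^ 2) := (Real.sqrt_sq_eq_abs _).symm
            _ ≤ Real.sqrt (r ^ 2) := Real.sqrt_le_sqrt h1
            _ = r := Real.sqrt_sq hr.le
          · calc |z k| = Real.sqrt (z k ^ 2) := (Real.sqrt_sq_eq_abs _).symm
            _ ≤ Real.sqrt (2 / r ^ 2) := Real.sqrt_le_sqrt h2
            _ = Real.sqrt 2 / r := by
                rw [Real.sqrt_div (by norm_num : (0:ℝ) ≤ 2), Real.sqrt_sq hr.le]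
        exact abs_le.mp habs
      have hr2 : 0 < r ^ 2 := by positivity
      have hmem : ∀ k : Fin 3, z k ∈ Set.Icc (-(c k)) (c k) := by
        intro k
        by_cases hk : k = 0
        · subst hk
          have hc0 : c 0 = r := by simp [hc_def]
          rw [hc0]
          exact abs_le.mp habs0
        · have hk' : k = 1 ∨ k = 2 := by
            have h3 := k.2
            have h0 : k.1 ≠ 0 := fun h => hk (Fin.ext h)
            have h12' : k.1 = 1 ∨ k.1 = 2 := by omega
            rcases h12' with h | h
            · exact Or.inl (Fin.ext h)
            · exact Or.inr (Fin.ext h)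
          have hcm : c k = m := by
            rcases hk' with rfl | rfl <;> simp [hc_def]
          rw [hcm]
          rcases hk' with rfl | rfl
          · exact key 1 (by nlinarith [sq_nonneg (z 0), sq_nonneg (z 2)])
              (by rw [le_div_iff₀ hr2]; nlinarith [sq_nonneg (z 2)])
          · exact key 2 (by nlinarith [sq_nonneg (z 0), sq_nonneg (z 1)])
              (by rw [le_div_iff₀ hr2]; nlinarith [sq_nonneg (z 1)])
      rw [hB_def, Set.mem_preimage]
      intro k _
      exact hmem k
    have hBpi : MeasurableSet (Set.univ.pi fun k => Set.Icc (-(c k)) (c k)) :=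
      MeasurableSet.univ_pi fun k => measurableSet_Icc
    have hBmeas : MeasurableSet B :=
      (MeasurableEquiv.toLp 2 (Fin 3 → ℝ)).symm.measurable hBpi
    refine le_trans (measure_mono hsub) ?_
    rw [b.measurePreserving_repr.measure_preimage hBmeas.nullMeasurableSet]
    rw [hB_def,
      (EuclideanSpace.volume_preserving_symm_measurableEquiv_toLp (Fin 3)).measure_preimage hBpi.nullMeasurableSet]
    rw [volume_pi_pi, Fin.prod_univ_three]
    have hc0 : c 0 = r := by simp [hc_def]
    have hc1 : c 1 = m := by simp [hc_def]
    have hc2 : c 2 = m := by simp [hc_def]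
    rw [hc0, hc1, hc2]; simp only [Real.volume_Icc]
    rw [← ENNReal.ofReal_mul (by linarith), ← ENNReal.ofReal_mul (by nlinarith)]
    refine ENNReal.ofReal_le_ofReal ?_
    have hmin : 16 * min (r^3) r⁻¹ = min (16 * r^3) (16 * r⁻¹) := by
      rw [mul_min_of_nonneg _ _ (by norm_num : (0:ℝ) ≤ 16)]
    rw [hmin]
    refine le_min ?_ ?_
    · have h1 : r * (m * m) ≤ r * (r * r) :=
        mul_le_mul_of_nonneg_left (mul_le_mul hm1 hm1 hm0 hr.le) hr.le
      nlinarith [mul_pos hr (mul_pos hr hr)]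
    · have h1 : r * (m * m) ≤ r * (2 / r ^ 2) := mul_le_mul_of_nonneg_left hmm2 hr.le
      have h2 : 8 * (r * (2 / r ^ 2)) = 16 * r⁻¹ := by
        field_simp
        ring
      nlinarith

lemma key_ineq (n : ℕ) (hn : 5 ≤ n) (r : ℝ) (hr : 0 ≤ r) :
    r * (min (r^3) r⁻¹)^n ≤ 16 * (1+r) ^ (-(4:ℝ)) := by
  have h4 : ((1:ℝ)+r) ^ (-(4:ℝ)) = ((1+r)^(4:ℕ))⁻¹ := by
    rw [← Real.rpow_natCast (1+r) 4, ← Real.rpow_neg (by linarith)]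
    norm_num
  have hm0 : 0 ≤ min (r^3) r⁻¹ := le_min (by positivity) (by positivity)
  rw [h4]
  rcases le_total r 1 with h | h
  · have h1 : (min (r^3) r⁻¹)^n ≤ (r^3)^n := pow_le_pow_left₀ hm0 (min_le_left _ _) n
    have h2 : (r^3)^n ≤ 1 := pow_le_one₀ (by positivity) (pow_le_one₀ hr h)
    have hL : r * (min (r^3) r⁻¹)^n ≤ 1 := by nlinarith
    have hp : ((1:ℝ)+r)^(4:ℕ) ≤ 16 := by
      have := pow_le_pow_left₀ (by linarith : (0:ℝ) ≤ 1+r) (by linarith : 1+r ≤ 2) 4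
      norm_num at this
      linarith
    have hpos : (0:ℝ) < (1+r)^(4:ℕ) := by positivity
    have hR : (1:ℝ) ≤ 16 * ((1+r)^(4:ℕ))⁻¹ := by
      rw [← div_eq_mul_inv, le_div_iff₀ hpos]
      linarith
    linarith
  · have hr0 : 0 < r := lt_of_lt_of_le one_pos h
    have hi1 : r⁻¹ ≤ 1 := inv_le_one_of_one_le₀ h
    have h1 : (min (r^3) r⁻¹)^n ≤ (r⁻¹)^n := pow_le_pow_left₀ hm0 (min_le_right _ _) n
    have h2 : (r⁻¹)^n ≤ (r⁻¹)^5 := pow_le_pow_of_le_one (by positivity) hi1 hn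
    have h3 : r * (r⁻¹)^5 = (r^(4:ℕ))⁻¹ := by
      field_simp
    have hL : r * (min (r^3) r⁻¹)^n ≤ (r^(4:ℕ))⁻¹ := by
      have := mul_le_mul_of_nonneg_left (h1.trans h2) hr
      linarith [h3]
    have hp : ((1:ℝ)+r)^(4:ℕ) ≤ 16 * r^(4:ℕ) := by
      have := pow_le_pow_left₀ (by linarith : (0:ℝ) ≤ 1+r) (by linarith : 1+r ≤ 2*r) 4
      nlinarith
    have hpos : (0:ℝ) < (1+r)^(4:ℕ) := by positivity
    have hpos4 : (0:ℝ) < r^(4:ℕ) := by positivity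
    have hR : (r^(4:ℕ))⁻¹ ≤ 16 * ((1+r)^(4:ℕ))⁻¹ := by
      rw [← div_eq_mul_inv, le_div_iff₀ hpos, inv_mul_eq_div, div_le_iff₀ hpos4]
      nlinarith
    linarith

/-- For every integer `D > 5`, the integral of the Euclidean norm over the valley
`Ω = {X ∈ (ℝ³)^D : V_B(X) < 1}` is finite. -/
theorem integral_norm_valley_lt_top (D : ℕ) (hD : 5 < D) :
    ∫⁻ X in {X : Fin D → EuclideanSpace ℝ (Fin 3) | VB D X < 1},
      ENNReal.ofReal (confNorm D X) < ⊤ := by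
  obtain ⟨n, rfl⟩ : ∃ n, D = n + 1 := ⟨D - 1, by omega⟩
  have hn : 5 ≤ n := by omega
  set A : E3 → Set E3 := fun x => {y | ‖y‖ ≤ ‖x‖ ∧ Qf x y < 2} with hA
  have hAmeas : ∀ x, MeasurableSet (A x) := by
    intro x
    exact (measurableSet_le measurable_norm measurable_const).inter
      (measurableSet_lt
        ((measurable_const.mul (measurable_norm.pow_const 2)).sub
          ((measurable_const.inner measurable_id).pow_const 2)) measurable_const)
  set T : Fin (n+1) → Set (Fin (n+1) → E3) := fun i => {X | ∀ j, X j ∈ A (X i)} with hT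
  -- covering
  have hcover : {X : Fin (n+1) → E3 | VB (n+1) X < 1} ⊆ ⋃ i, T i := by
    intro X hX
    obtain ⟨i, -, hi⟩ := Finset.exists_max_image Finset.univ (fun j => ‖X j‖)
      ⟨0, Finset.mem_univ 0⟩
    refine Set.mem_iUnion.mpr ⟨i, fun j => ⟨hi j (Finset.mem_univ j), ?_⟩⟩
    have h1 : ∀ a b : Fin (n+1), (0:ℝ) ≤ ‖cross3 (X a) (X b)‖^2 := fun a b => sq_nonneg _
    have h2 : ‖cross3 (X i) (X j)‖^2 ≤ ∑ a, ∑ b, ‖cross3 (X a) (X b)‖^2 := by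
      calc ‖cross3 (X i) (X j)‖^2 ≤ ∑ b, ‖cross3 (X i) (X b)‖^2 :=
            Finset.single_le_sum (fun b _ => h1 i b) (Finset.mem_univ j)
      _ ≤ ∑ a, ∑ b, ‖cross3 (X a) (X b)‖^2 :=
            Finset.single_le_sum
              (fun a _ => Finset.sum_nonneg fun b _ => h1 a b) (Finset.mem_univ i)
    have hX' : VB (n+1) X < 1 := hX
    rw [VB] at hX'
    rw [← cross3_norm_sq]
    linarith
  -- measurability of T i
  have hTmeas : ∀ i, MeasurableSet (T i) := by
    intro i
    have : T i = ⋂ j, {X : Fin (n+1) → E3 | ‖X j‖ ≤ ‖X i‖ ∧ Qf (X i) (X j) < 2} := by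
      ext X; simp [hT, hA, Set.mem_iInter]
    rw [this]
    refine MeasurableSet.iInter fun j => ?_
    have hq : Measurable fun X : Fin (n+1) → E3 => Qf (X i) (X j) := by
      have : (fun X : Fin (n+1) → E3 => Qf (X i) (X j)) =
          fun X : Fin (n+1) → E3 =>
            ‖X i‖^2 * ‖X j‖^2 - (inner ℝ (X i) (X j) : ℝ)^2 := rfl
      rw [this]
      exact (((measurable_pi_apply i).norm.pow_const 2).mul
          ((measurable_pi_apply j).norm.pow_const 2)).sub
        (((measurable_pi_apply i).inner (measurable_pi_apply j)).pow_const 2)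
    exact (measurableSet_le (measurable_pi_apply j).norm (measurable_pi_apply i).norm).inter
      (measurableSet_lt hq measurable_const)
  -- per-piece bound
  have hpiece : ∀ i : Fin (n+1),
      ∫⁻ X in T i, ENNReal.ofReal (confNorm (n+1) X) < ⊤ := by
    intro i
    classical
    set g : (Fin (n+1) → E3) → ℝ≥0∞ :=
      fun X => ENNReal.ofReal (Real.sqrt (n+1) * ‖X i‖) with hg
    have hgmeas : Measurable g := ((measurable_pi_apply i).norm.const_mul _).ennreal_ofReal
    have hbound : ∀ X ∈ T i, ENNReal.ofReal (confNorm (n+1) X) ≤ g X := by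
      intro X hX
      refine ENNReal.ofReal_le_ofReal ?_
      rw [confNorm]
      have hsum : (∑ j, ‖X j‖^2) ≤ (n+1) * ‖X i‖^2 := by
        calc ∑ j, ‖X j‖^2 ≤ ∑ _j : Fin (n+1), ‖X i‖^2 :=
              Finset.sum_le_sum fun j _ => by
                have h := (hX j).1
                nlinarith [norm_nonneg (X j), norm_nonneg (X i)]
        _ = (n+1) * ‖X i‖^2 := by
              rw [Finset.sum_const, Finset.card_univ, Fintype.card_fin, nsmul_eq_mul]
              push_cast
              ring
      calc Real.sqrt (∑ j, ‖X j‖^2) ≤ Real.sqrt ((n+1) * ‖X i‖^2) := Real.sqrt_le_sqrt hsum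
      _ = Real.sqrt (n+1) * ‖X i‖ := by
          rw [Real.sqrt_mul (by positivity), Real.sqrt_sq (norm_nonneg _)]
    have h1 : ∫⁻ X in T i, ENNReal.ofReal (confNorm (n+1) X) ≤ ∫⁻ X in T i, g X :=
      setLIntegral_mono hgmeas hbound
    set e := MeasurableEquiv.piFinSuccAbove (fun _ : Fin (n+1) => E3) i with he
    have hmp := measurePreserving_piFinSuccAbove (fun _ : Fin (n+1) => (volume : Measure E3)) i
    set S : Set (E3 × (Fin n → E3)) := {q | ∀ k, q.2 k ∈ A q.1} with hS
    have hSmeas : MeasurableSet S := by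
      have hSeq : S = ⋂ k, {q : E3 × (Fin n → E3) | ‖q.2 k‖ ≤ ‖q.1‖ ∧ Qf q.1 (q.2 k) < 2} := by
        ext q; simp [hS, hA, Set.mem_iInter]
      rw [hSeq]
      refine MeasurableSet.iInter fun k => ?_
      have hq : Measurable fun q : E3 × (Fin n → E3) => Qf q.1 (q.2 k) := by
        have hqq : (fun q : E3 × (Fin n → E3) => Qf q.1 (q.2 k)) =
            fun q : E3 × (Fin n → E3) =>
              ‖q.1‖^2 * ‖q.2 k‖^2 - (inner ℝ q.1 (q.2 k) : ℝ)^2 := rfl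
        rw [hqq]
        have hm2 : Measurable fun q : E3 × (Fin n → E3) => q.2 k :=
          (measurable_pi_apply k).comp measurable_snd
        have hm1 : Measurable fun q : E3 × (Fin n → E3) => q.1 := measurable_fst
        exact ((hm1.norm.pow_const 2).mul (hm2.norm.pow_const 2)).sub
          ((hm1.inner hm2).pow_const 2)
      exact (measurableSet_le ((measurable_pi_apply k).comp measurable_snd).norm
        measurable_fst.norm).inter (measurableSet_lt hq measurable_const)
    set G : E3 × (Fin n → E3) → ℝ≥0∞ :=
      fun q => S.indicator (fun q => ENNReal.ofReal (Real.sqrt (n+1) * ‖q.1‖)) q with hG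
    have hGmeas : Measurable G :=
      (measurable_fst.norm.const_mul _).ennreal_ofReal.indicator hSmeas
    have hPi : ∀ x : E3, x ∈ A x := by
      intro x
      refine ⟨le_refl _, ?_⟩
      have : Qf x x = ‖x‖^2 * ‖x‖^2 - (inner ℝ x x : ℝ)^2 := rfl
      rw [this, real_inner_self_eq_norm_sq]
      ring_nf
      norm_num
    have hcomp : ∀ X, (T i).indicator g X = G (e X) := by
      intro X
      have hmem : X ∈ T i ↔ e X ∈ S := by
        simp only [hT, hS, Set.mem_setOf_eq]
        have heX1 : (e X).1 = X i := rfl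
        have heX2 : ∀ k, (e X).2 k = X (i.succAbove k) := fun k => rfl
        constructor
        · intro h k
          rw [heX1, heX2]
          exact h _
        · intro h j
          by_cases hj : j = i
          · subst hj; exact hPi _
          · obtain ⟨k, hk⟩ := Fin.exists_succAbove_eq hj
            have hk' := h k
            rw [heX1, heX2, hk] at hk'
            exact hk'
      simp only [hG, Set.indicator_apply]
      by_cases hX : X ∈ T i
      · rw [if_pos hX, if_pos (hmem.mp hX)]
        rfl
      · rw [if_neg hX, if_neg (fun h => hX (hmem.mpr h))]
    have h2 : ∫⁻ X in T i, g X
        = ∫⁻ q, G q ∂((volume : Measure E3).prod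
            (Measure.pi fun _ : Fin n => (volume : Measure E3))) := by
      rw [← lintegral_indicator (hTmeas i)]
      calc ∫⁻ X, (T i).indicator g X = ∫⁻ X, G (e X) := by
            refine lintegral_congr fun X => hcomp X
      _ = _ := by
            rw [volume_pi]
            exact hmp.lintegral_comp hGmeas
    have h3 : ∫⁻ q, G q ∂((volume : Measure E3).prod
          (Measure.pi fun _ : Fin n => (volume : Measure E3)))
        = ∫⁻ x : E3, ENNReal.ofReal (Real.sqrt (n+1) * ‖x‖) * (volume (A x))^n := by
      rw [lintegral_prod _ hGmeas.aemeasurable]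
      refine lintegral_congr fun x => ?_
      have hGxy : ∀ y : Fin n → E3, G (x, y) =
          (Set.univ.pi fun _ : Fin n => A x).indicator
            (fun _ => ENNReal.ofReal (Real.sqrt (n+1) * ‖x‖)) y := by
        intro y
        rw [hG]
        simp only [Set.indicator_apply, hS, Set.mem_setOf_eq, Set.mem_pi, Set.mem_univ,
          forall_true_left]
      simp_rw [hGxy]
      rw [lintegral_indicator (MeasurableSet.univ_pi fun _ => hAmeas x), setLIntegral_const,
        Measure.pi_pi, Finset.prod_const, Finset.card_univ, Fintype.card_fin]
    have h4 : ∫⁻ x : E3, ENNReal.ofReal (Real.sqrt (n+1) * ‖x‖) * (volume (A x))^n < ⊤ := by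
      set C : ℝ := Real.sqrt (n+1) * 16^n * 16 with hC
      have hpt : ∀ x : E3, ENNReal.ofReal (Real.sqrt (n+1) * ‖x‖) * (volume (A x))^n
          ≤ ENNReal.ofReal (C * (1+‖x‖) ^ (-(4:ℝ))) := by
        intro x
        have hv := volume_A_le x
        have hmin0 : (0:ℝ) ≤ min (‖x‖^3) ‖x‖⁻¹ := le_min (by positivity) (by positivity)
        have hm16 : (0:ℝ) ≤ 16 * min (‖x‖^3) ‖x‖⁻¹ := by linarith
        calc ENNReal.ofReal (Real.sqrt (n+1) * ‖x‖) * (volume (A x))^n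
            ≤ ENNReal.ofReal (Real.sqrt (n+1) * ‖x‖)
              * (ENNReal.ofReal (16 * min (‖x‖^3) ‖x‖⁻¹))^n :=
              mul_le_mul_right (pow_le_pow_left' hv n) _
        _ = ENNReal.ofReal (Real.sqrt (n+1) * ‖x‖ * (16 * min (‖x‖^3) ‖x‖⁻¹)^n) := by
              rw [← ENNReal.ofReal_pow hm16, ← ENNReal.ofReal_mul (by positivity)]
        _ ≤ ENNReal.ofReal (C * (1+‖x‖) ^ (-(4:ℝ))) := by
              refine ENNReal.ofReal_le_ofReal ?_
              have hk := key_ineq n hn ‖x‖ (norm_nonneg x)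
              have h0 : (0:ℝ) ≤ Real.sqrt (n+1) * 16^n := by positivity
              calc Real.sqrt (n+1) * ‖x‖ * (16 * min (‖x‖^3) ‖x‖⁻¹)^n
                  = (Real.sqrt (n+1) * 16^n) * (‖x‖ * (min (‖x‖^3) ‖x‖⁻¹)^n) := by
                    rw [mul_pow]; ring
              _ ≤ (Real.sqrt (n+1) * 16^n) * (16 * (1+‖x‖) ^ (-(4:ℝ))) :=
                    mul_le_mul_of_nonneg_left hk h0
              _ = C * (1+‖x‖) ^ (-(4:ℝ)) := by rw [hC]; ring
      have hintC : Integrable (fun x : E3 => C * (1+‖x‖) ^ (-(4:ℝ))) :=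
        (integrable_one_add_norm
          (by rw [finrank_euclideanSpace_fin]; norm_num)).const_mul C
      exact lt_of_le_of_lt (lintegral_mono hpt) hintC.lintegral_lt_top
    exact lt_of_le_of_lt (h1.trans (le_of_eq (h2.trans h3))) h4
  calc ∫⁻ X in {X : Fin (n+1) → E3 | VB (n+1) X < 1}, ENNReal.ofReal (confNorm (n+1) X)
      ≤ ∫⁻ X in ⋃ i, T i, ENNReal.ofReal (confNorm (n+1) X) := lintegral_mono_set hcover
  _ ≤ ∑' i, ∫⁻ X in T i, ENNReal.ofReal (confNorm (n+1) X) := lintegral_iUnion_le _ _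
  _ < ⊤ := by
      rw [tsum_fintype]
      exact ENNReal.sum_lt_top.mpr fun i _ => hpiece i
end
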